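/- Let (X_t)_{t∈ℤ} be a stationary time series all of whose finite-dimensional distributions are continuous, let d ∈ ℕ, X̄_t = (X_t,…,X_{t+d−1}), and p ≥ 1. Then the kernel h(x,y) = 1{Π(x)=Π(y)} is p-continuous with respect to (X̄_t): with φ(ε) := 2^p · P(ms(X̄_1) ≤ 2ε) one has φ(ε) → 0 as ε → 0, and E(|h(U,V) − h(Ũ,V)|^p · 1{‖U−Ũ‖_1 ≤ ε}) ≤ φ(ε) for all random vectors U, Ũ, V with marginal law F = law(X̄_0) such that (U,V) has law F×F or the law of (X̄_0, X̄_t) for some t ≥ 1. -/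

import Mathlib

open MeasureTheory ProbabilityTheory Filter
open scoped Classical Topology

noncomputable section

/-- The ordinal pattern of a vector `x ∈ ℝ^d`: the permutation `π` with
`π j < π k ↔ (x j < x k ∨ (x j = x k ∧ j < k))` (ranks, ties broken by index).
`Tuple.sort` sorts the graph of `x` lexicographically, so its inverse assigns ranks. -/
def pattern {d : ℕ} (x : Fin d → ℝ) : Equiv.Perm (Fin d) := (Tuple.sort x)⁻¹

/-- The minimal spread of a vector: the smallest distance between two distinct entries. -/
def minSpread {d : ℕ} (x : Fin d → ℝ) : ℝ :=
  sInf {r : ℝ | ∃ j k : Fin d, j ≠ k ∧ r = |x j - x k|}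

/-- The sliding window `X̄_t = (X_t, …, X_{t+d-1})`. -/
def window {Ω : Type*} (X : ℤ → Ω → ℝ) (d : ℕ) (t : ℤ) (ω : Ω) : Fin d → ℝ :=
  fun i => X (t + (i : ℕ)) ω

/-- A stationary time series. -/
def Stationary {Ω : Type*} [MeasurableSpace Ω] (μ : Measure Ω) (X : ℤ → Ω → ℝ) : Prop :=
  ∀ t : ℤ, Measure.map (fun ω => fun s : ℤ => X (s + t) ω) μ
    = Measure.map (fun ω => fun s : ℤ => X s ω) μ

lemma pattern_eq_of {d : ℕ} {x y : Fin d → ℝ}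
    (H : ∀ j k : Fin d, j ≠ k → x j ≤ x k → y j < y k) : pattern x = pattern y := by
  have hinj : ∀ j k : Fin d, x j = x k → j = k := by
    intro j k h
    by_contra hne
    exact (H j k hne h.le).asymm (H k j (Ne.symm hne) h.ge)
  set σ := Tuple.sort y with hσ
  obtain ⟨hmono, -⟩ := (Tuple.eq_sort_iff (f := y)).1 hσ
  have hsx : σ = Tuple.sort x := by
    rw [Tuple.eq_sort_iff]
    constructor
    · intro i j hij
      by_contra hcon
      push_neg at hcon
      have hne : σ j ≠ σ i := fun e => hcon.ne (congrArg x e)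
      have := H (σ j) (σ i) hne hcon.le
      exact absurd (hmono hij) this.not_ge
    · intro i j hij he
      exact absurd (σ.injective (hinj _ _ he)) hij.ne
  unfold pattern
  rw [← hsx, hσ]

lemma exists_pair_of_pattern_ne {d : ℕ} {x y : Fin d → ℝ} (h : pattern x ≠ pattern y) :
    ∃ j k : Fin d, j ≠ k ∧ x j ≤ x k ∧ y k ≤ y j := by
  by_contra hc
  push_neg at hc
  exact h (pattern_eq_of fun j k hjk hle => hc j k hjk hle)

lemma minSpread_le_iff {d : ℕ} (hd : 2 ≤ d) (x : Fin d → ℝ) (c : ℝ) :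
    minSpread x ≤ c ↔ ∃ j k : Fin d, j ≠ k ∧ |x j - x k| ≤ c := by
  set S : Set ℝ := {r : ℝ | ∃ j k : Fin d, j ≠ k ∧ r = |x j - x k|} with hS
  have hfin : S.Finite := by
    have hsub : S ⊆ (fun jk : Fin d × Fin d => |x jk.1 - x jk.2|) '' Set.univ := by
      rintro r ⟨j, k, -, rfl⟩
      exact ⟨(j, k), trivial, rfl⟩
    exact ((Set.finite_univ).image _).subset hsub
  have hne : S.Nonempty := by
    refine ⟨|x ⟨0, by omega⟩ - x ⟨1, by omega⟩|, ⟨0, by omega⟩, ⟨1, by omega⟩, ?_, rfl⟩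
    simp [Fin.ext_iff]
  constructor
  · intro h
    obtain ⟨j, k, hjk, hr⟩ := hne.csInf_mem hfin
    exact ⟨j, k, hjk, hr ▸ h⟩
  · rintro ⟨j, k, hjk, hle⟩
    exact le_trans (csInf_le hfin.bddBelow ⟨j, k, hjk, rfl⟩) hle

lemma measurableSet_minSpread_le {d : ℕ} (hd : 2 ≤ d) (c : ℝ) :
    MeasurableSet {x : Fin d → ℝ | minSpread x ≤ c} := by
  have he : {x : Fin d → ℝ | minSpread x ≤ c}
      = ⋃ j : Fin d, ⋃ k : Fin d, {x : Fin d → ℝ | j ≠ k ∧ |x j - x k| ≤ c} := by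
    ext x
    simp only [Set.mem_setOf_eq, Set.mem_iUnion, minSpread_le_iff hd]
  rw [he]
  refine MeasurableSet.iUnion fun j => MeasurableSet.iUnion fun k => ?_
  by_cases hjk : j = k
  · simp [hjk]
  · have : {x : Fin d → ℝ | j ≠ k ∧ |x j - x k| ≤ c}
        = (fun x : Fin d → ℝ => |x j - x k|) ⁻¹' Set.Iic c := by
      ext x; simp [hjk]
    rw [this]
    exact (((measurable_pi_apply j).sub (measurable_pi_apply k)).abs) measurableSet_Iic

lemma minSpread_le_of_pattern_ne {d : ℕ} (hd : 2 ≤ d) {x y : Fin d → ℝ} {ε : ℝ} (hε : 0 < ε)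
    (h : pattern x ≠ pattern y) (hsum : ∑ i, |x i - y i| ≤ ε) : minSpread x ≤ 2 * ε := by
  obtain ⟨j, k, hjk, hx, hy⟩ := exists_pair_of_pattern_ne h
  have hpair : |x j - y j| + |x k - y k| ≤ ε := by
    have h1 : ∑ i ∈ ({j, k} : Finset (Fin d)), |x i - y i| ≤ ∑ i, |x i - y i| :=
      Finset.sum_le_sum_of_subset_of_nonneg (Finset.subset_univ _)
        (fun i _ _ => abs_nonneg _)
    rw [Finset.sum_pair hjk] at h1
    linarith
  have h2 : x k - y k ≤ |x k - y k| := le_abs_self _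
  have h3 : y j - x j ≤ |x j - y j| := (le_abs_self _).trans_eq (abs_sub_comm _ _)
  have habs : |x j - x k| ≤ 2 * ε := by
    rw [abs_sub_comm, abs_of_nonneg (by linarith)]
    linarith
  exact (minSpread_le_iff hd x _).2 ⟨j, k, hjk, habs⟩

/-- For a stationary time series with continuous finite-dimensional
distributions (no ties: `P(X_i = X_j) = 0` for `i ≠ j`), the kernel
`h(x,y) = 1{Π(x) = Π(y)}` is `p`-continuous with modulus `φ(ε) = 2^p · P(ms(X̄_1) ≤ 2ε)`:
`φ(ε) → 0` as `ε ↓ 0`, and `E(|h(U,V) − h(Ũ,V)|^p · 1{‖U−Ũ‖₁ ≤ ε}) ≤ φ(ε)` for all random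
vectors `U, Ũ, V` with marginal law `F = law(X̄_0)` such that `(U,V)` has law `F × F` or the
law of `(X̄_0, X̄_t)` for some `t ≥ 1`. -/
theorem stmt_2 {Ω : Type*} [MeasurableSpace Ω] (μ : Measure Ω) [IsProbabilityMeasure μ]
    (X : ℤ → Ω → ℝ) (hXmeas : ∀ t, Measurable (X t)) (hstat : Stationary μ X)
    (hcont : ∀ i j : ℤ, i ≠ j → μ {ω | X i ω = X j ω} = 0)
    (d : ℕ) (hd : 2 ≤ d) (p : ℝ) (hp : 1 ≤ p)
    (φ : ℝ → ℝ)
    (hφ : ∀ ε : ℝ, φ ε = 2 ^ p * (μ {ω | minSpread (window X d 1 ω) ≤ 2 * ε}).toReal) :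
    Tendsto φ (nhdsWithin 0 (Set.Ioi 0)) (nhds 0)
    ∧ ∀ (Ω' : Type) (_ : MeasurableSpace Ω') (μ' : Measure Ω') (_ : IsProbabilityMeasure μ')
        (U Ut V : Ω' → (Fin d → ℝ)),
        Measurable U → Measurable Ut → Measurable V →
        Measure.map U μ' = Measure.map (window X d 0) μ →
        Measure.map Ut μ' = Measure.map (window X d 0) μ →
        Measure.map V μ' = Measure.map (window X d 0) μ →
        ((Measure.map (fun ω => (U ω, V ω)) μ'
            = (Measure.map (window X d 0) μ).prod (Measure.map (window X d 0) μ))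
          ∨ (∃ t : ℤ, 1 ≤ t ∧ Measure.map (fun ω => (U ω, V ω)) μ'
              = Measure.map (fun ω => (window X d 0 ω, window X d t ω)) μ)) →
        ∀ ε : ℝ, 0 < ε →
          ∫ ω, |(if pattern (U ω) = pattern (V ω) then (1 : ℝ) else 0)
                - (if pattern (Ut ω) = pattern (V ω) then (1 : ℝ) else 0)| ^ p
              * (if (∑ i, |U ω i - Ut ω i|) ≤ ε then (1 : ℝ) else 0) ∂μ' ≤ φ ε := by
  have hwin : ∀ t : ℤ, Measurable (window X d t) :=
    fun t => measurable_pi_lambda _ fun i => hXmeas _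
  have hmap : ∀ t : ℤ, Measure.map (window X d t) μ = Measure.map (window X d 0) μ := by
    intro t
    have hG : Measurable (fun f : ℤ → ℝ => fun i : Fin d => f (i : ℕ)) :=
      measurable_pi_lambda _ fun i => measurable_pi_apply _
    have hpath : Measurable (fun ω => fun u : ℤ => X (u + t) ω) :=
      measurable_pi_lambda _ fun u => hXmeas _
    have hpath0 : Measurable (fun ω => fun u : ℤ => X u ω) :=
      measurable_pi_lambda _ fun u => hXmeas _
    have h1 : window X d t
        = (fun f : ℤ → ℝ => fun i : Fin d => f (i : ℕ)) ∘ (fun ω => fun u : ℤ => X (u + t) ω) := by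
      funext ω i
      simp [window, Function.comp, add_comm]
    have h2 : window X d 0
        = (fun f : ℤ → ℝ => fun i : Fin d => f (i : ℕ)) ∘ (fun ω => fun u : ℤ => X u ω) := by
      funext ω i
      simp [window, Function.comp]
    rw [h1, h2, ← Measure.map_map hG hpath, hstat t, Measure.map_map hG hpath0]
  have h2p : (0:ℝ) < 2 ^ p := Real.rpow_pos_of_pos two_pos p
  constructor
  · -- the tendsto part
    set A : ℕ → Set Ω := fun n => {ω | minSpread (window X d 1 ω) ≤ ((n:ℝ)+1)⁻¹} with hA
    have hAmeas : ∀ n, MeasurableSet (A n) :=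
      fun n => (hwin 1) (measurableSet_minSpread_le hd _)
    have hanti : Antitone A := by
      intro m n hmn ω hω
      have h2 : ((m:ℝ)+1) ≤ ((n:ℝ)+1) := by exact_mod_cast Nat.succ_le_succ hmn
      have h1 : ((n:ℝ)+1)⁻¹ ≤ ((m:ℝ)+1)⁻¹ := inv_anti₀ (by positivity) h2
      show minSpread (window X d 1 ω) ≤ ((m:ℝ)+1)⁻¹
      exact le_trans hω h1
    have hinter : ⋂ n, A n = {ω | minSpread (window X d 1 ω) ≤ 0} := by
      ext ω
      simp only [Set.mem_iInter, hA, Set.mem_setOf_eq]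
      constructor
      · intro h
        by_contra hc
        push_neg at hc
        obtain ⟨n, hn⟩ := exists_nat_one_div_lt hc
        have := h n
        rw [one_div] at hn
        linarith
      · intro h n
        exact h.trans (by positivity)
    have hzero : μ {ω | minSpread (window X d 1 ω) ≤ 0} = 0 := by
      have hsub : {ω | minSpread (window X d 1 ω) ≤ 0}
          ⊆ ⋃ j : Fin d, ⋃ k : Fin d,
            {ω | j ≠ k ∧ X (1 + (j:ℕ)) ω = X (1 + (k:ℕ)) ω} := by
        intro ω hω
        obtain ⟨j, k, hjk, habs⟩ := (minSpread_le_iff hd _ 0).1 hω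
        have h0 : |window X d 1 ω j - window X d 1 ω k| = 0 :=
          le_antisymm habs (abs_nonneg _)
        have heq : window X d 1 ω j = window X d 1 ω k := by
          have := abs_eq_zero.1 h0
          linarith
        simp only [Set.mem_iUnion, Set.mem_setOf_eq]
        exact ⟨j, k, hjk, heq⟩
      refine measure_mono_null hsub ?_
      refine measure_iUnion_null fun j => measure_iUnion_null fun k => ?_
      by_cases hjk : j = k
      · simp [hjk]
      · refine measure_mono_null (fun ω hω => hω.2) (hcont _ _ ?_)
        intro he
        apply hjk
        have hv : (j:ℕ) = (k:ℕ) := by omega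
        exact Fin.ext hv
    have htend : Tendsto (fun n => μ (A n)) atTop (𝓝 0) := by
      have h := tendsto_measure_iInter_atTop (fun n => (hAmeas n).nullMeasurableSet) hanti
        ⟨0, measure_ne_top μ _⟩
      rw [hinter, hzero] at h
      exact h
    have htendR : Tendsto (fun n => (μ (A n)).toReal) atTop (𝓝 0) := by
      have := (ENNReal.tendsto_toReal (a := 0) (by simp)).comp htend
      simpa [Function.comp_def] using this
    rw [NormedAddCommGroup.tendsto_nhds_zero]
    intro δ hδ
    obtain ⟨n, hn⟩ := ((tendsto_order.1 htendR).2 (δ / 2 ^ p) (by positivity)).exists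
    have hbpos : (0:ℝ) < (2*((n:ℝ)+1))⁻¹ := by positivity
    filter_upwards [Ioo_mem_nhdsGT_of_mem (Set.left_mem_Ico.2 hbpos)] with ε hε
    have hkey : 2 * (2*((n:ℝ)+1))⁻¹ = ((n:ℝ)+1)⁻¹ := by
      rw [mul_inv, ← mul_assoc, mul_inv_cancel₀ two_ne_zero, one_mul]
    have hsub : {ω | minSpread (window X d 1 ω) ≤ 2*ε} ⊆ A n := by
      intro ω hω
      have h2e : 2*ε ≤ ((n:ℝ)+1)⁻¹ := by
        have := hε.2
        nlinarith
      exact le_trans hω h2e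
    have hmono : (μ {ω | minSpread (window X d 1 ω) ≤ 2*ε}).toReal ≤ (μ (A n)).toReal :=
      ENNReal.toReal_mono (measure_ne_top μ _) (measure_mono hsub)
    have hφnn : 0 ≤ φ ε := by rw [hφ ε]; positivity
    rw [Real.norm_eq_abs, abs_of_nonneg hφnn, hφ ε]
    calc 2 ^ p * (μ {ω | minSpread (window X d 1 ω) ≤ 2*ε}).toReal
        ≤ 2 ^ p * (μ (A n)).toReal := by
          exact mul_le_mul_of_nonneg_left hmono h2p.le
      _ < δ := by
          rw [mul_comm]
          exact (lt_div_iff₀ h2p).1 hn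
  · intro Ω' mΩ' μ' hμ' U Ut V hUm hUtm hVm hUlaw hUtlaw hVlaw hjoint ε hε
    set A := {x : Fin d → ℝ | minSpread x ≤ 2*ε} with hAdef
    have hAm' : MeasurableSet A := measurableSet_minSpread_le hd _
    set f : Ω' → ℝ := fun ω =>
      |(if pattern (U ω) = pattern (V ω) then (1:ℝ) else 0)
        - (if pattern (Ut ω) = pattern (V ω) then (1:ℝ) else 0)| ^ p
      * (if (∑ i, |U ω i - Ut ω i|) ≤ ε then (1:ℝ) else 0) with hfdef
    have hf0 : ∀ ω, 0 ≤ f ω := by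
      intro ω
      apply mul_nonneg (Real.rpow_nonneg (abs_nonneg _) p)
      split <;> norm_num
    have hfg : ∀ ω, f ω ≤ (U ⁻¹' A).indicator (fun _ => (1:ℝ)) ω := by
      intro ω
      by_cases hpat : pattern (U ω) = pattern (Ut ω)
      · have hz : f ω = 0 := by
          rw [hfdef]
          simp only [hpat, sub_self, abs_zero]
          rw [Real.zero_rpow (by linarith), zero_mul]
        rw [hz]
        exact Set.indicator_nonneg (fun _ _ => zero_le_one) ω
      · by_cases hsum : (∑ i, |U ω i - Ut ω i|) ≤ ε
        · have hU' : U ω ∈ A := minSpread_le_of_pattern_ne hd hε hpat hsum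
          have hind : (U ⁻¹' A).indicator (fun _ => (1:ℝ)) ω = 1 :=
            Set.indicator_of_mem (show ω ∈ U ⁻¹' A from hU') _
          rw [hind]
          have habs : |(if pattern (U ω) = pattern (V ω) then (1:ℝ) else 0)
              - (if pattern (Ut ω) = pattern (V ω) then (1:ℝ) else 0)| ≤ 1 := by
            split_ifs <;> norm_num
          simp only [hfdef, if_pos hsum, mul_one]
          exact Real.rpow_le_one (abs_nonneg _) habs (by linarith)
        · have hz : f ω = 0 := by simp only [hfdef, if_neg hsum, mul_zero]
          rw [hz]
          exact Set.indicator_nonneg (fun _ _ => zero_le_one) ω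
    have hg_int : Integrable ((U ⁻¹' A).indicator (fun _ => (1:ℝ))) μ' :=
      (integrable_const (1:ℝ)).indicator (hUm hAm')
    have hint : ∫ ω, f ω ∂μ' ≤ ∫ ω, (U ⁻¹' A).indicator (fun _ => (1:ℝ)) ω ∂μ' :=
      integral_mono_of_nonneg (Filter.Eventually.of_forall hf0) hg_int
        (Filter.Eventually.of_forall hfg)
    have heq : ∫ ω, (U ⁻¹' A).indicator (fun _ => (1:ℝ)) ω ∂μ' = (μ' (U ⁻¹' A)).toReal := by
      rw [integral_indicator_const (1:ℝ) (hUm hAm'), smul_eq_mul, mul_one, measureReal_def]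
    have hμ'A : μ' (U ⁻¹' A) = μ {ω | minSpread (window X d 1 ω) ≤ 2*ε} := by
      rw [← Measure.map_apply hUm hAm', hUlaw, ← hmap 1, Measure.map_apply (hwin 1) hAm']
      rfl
    have h2p1 : (1:ℝ) ≤ 2 ^ p := Real.one_le_rpow (by norm_num) (by linarith)
    rw [hφ ε]
    refine le_trans hint ?_
    rw [heq, hμ'A]
    exact le_mul_of_one_le_left ENNReal.toReal_nonneg h2p1
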